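/- Let 𝒴 ⊆ ℝ^p be compact with diameter diam(𝒴), d a positive integer, m ∈ ℕ^d, and Q_ρ a probability measure on [0,1]^d assigning positive mass q_{C_k} > 0 to each cell C_k of Π_m (cells enumerated C_1,…,C_K). Let r_k(w) = 1{w ∈ C_k}, let γ_k : [0,1]^d → [0,1] be measurable with Σ_{k=1}^K γ_k(w) = 1 for all w, and set η_ρ = ∫ Σ_{k=1}^K |γ_k(w) − r_k(w)| dQ_ρ(w). For Borel probability measures ν_1,…,ν_K on 𝒴, define the soft law ν_w^{soft} = Σ_k γ_k(w) ν_k and the cell averages ν_{soft,C_k}^ρ = q_{C_k}^{−1} ∫_{C_k} ν_w^{soft} dQ_ρ(w). Then (i) Σ_{k=1}^K q_{C_k} · W₁(ν_{soft,C_k}^ρ, ν_k) ≤ diam(𝒴) · η_ρ, and (ii) ∫ W₁(ν_w^{soft}, ν_{soft,C_m(w)}^ρ) dQ_ρ(w) ≤ 2·diam(𝒴)·η_ρ, where C_m(w) denotes the cell of Π_m containing w. -/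

import Mathlib

open MeasureTheory
open scoped ENNReal

/-!
STATEMENT 13: Integrated soft-gate transfer. With cells `C_k` of `Π_m`, hard gates
`r_k = 1{· ∈ C_k}`, soft gates `γ_k` summing to one, integrated gate error
`η_ρ = ∫ Σ_k |γ_k − r_k| dQ_ρ`, expert laws `ν_k`, soft law
`ν_w^{soft} = Σ_k γ_k(w) ν_k` and cell averages
`ν_{soft,C_k}^ρ = q_{C_k}⁻¹ ∫_{C_k} ν_w^{soft} dQ_ρ`:
(i) `Σ_k q_{C_k} W₁(ν_{soft,C_k}^ρ, ν_k) ≤ diam(𝒴)·η_ρ`;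
(ii) `∫ W₁(ν_w^{soft}, ν_{soft,C_m(w)}^ρ) dQ_ρ(w) ≤ 2·diam(𝒴)·η_ρ`.
-/

noncomputable def W1 {Y : Type*} [MeasurableSpace Y] [PseudoMetricSpace Y]
    (η ζ : Measure Y) : ℝ :=
  sInf ((fun γ : Measure (Y × Y) => ∫ q, dist q.1 q.2 ∂γ) ''
    {γ | γ.map Prod.fst = η ∧ γ.map Prod.snd = ζ})

noncomputable def dyI (m k : ℕ) : Set ℝ :=
  if k + 1 = 2 ^ m then Set.Icc ((k : ℝ) / 2 ^ m) 1
  else Set.Ico ((k : ℝ) / 2 ^ m) (((k : ℝ) + 1) / 2 ^ m)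

noncomputable def dyCell {d : ℕ} (m : Fin d → ℕ) (k : ∀ j, Fin (2 ^ m j)) :
    Set (Fin d → ℝ) :=
  {w | ∀ j, w j ∈ dyI (m j) (k j)}

/-- The index of the cell of `Π_m` containing `w` (for `w` in the unit cube). -/
noncomputable def cellIndexOf {d : ℕ} (m : Fin d → ℕ) (w : Fin d → ℝ) :
    ∀ j, Fin (2 ^ m j) :=
  fun j => ⟨min ⌊w j * 2 ^ m j⌋₊ (2 ^ m j - 1),
    lt_of_le_of_lt (min_le_right _ _)
      (Nat.sub_lt (pow_pos (by norm_num) _) one_pos)⟩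

lemma measurableSet_dyI (m k : ℕ) : MeasurableSet (dyI m k) := by
  unfold dyI; split <;> [exact measurableSet_Icc; exact measurableSet_Ico]

lemma measurableSet_dyCell {d : ℕ} (m : Fin d → ℕ) (k : ∀ j, Fin (2 ^ m j)) :
    MeasurableSet (dyCell m k) := by
  have : dyCell m k = ⋂ j, (fun w : Fin d → ℝ => w j) ⁻¹' dyI (m j) (k j) := by
    ext w; simp [dyCell]
  rw [this]
  exact MeasurableSet.iInter fun j => (measurable_pi_apply j) (measurableSet_dyI _ _)

lemma mem_dyI_of_mem_Icc {m : ℕ} {x : ℝ} (hx : x ∈ Set.Icc (0:ℝ) 1) :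
    x ∈ dyI m (min ⌊x * 2 ^ m⌋₊ (2 ^ m - 1)) := by
  have h2 : (0:ℝ) < 2 ^ m := by positivity
  have hxn : 0 ≤ x * 2 ^ m := by nlinarith [hx.1]
  by_cases htop : min ⌊x * 2 ^ m⌋₊ (2 ^ m - 1) + 1 = 2 ^ m
  · rw [dyI, if_pos htop]
    have hmin : min ⌊x * 2 ^ m⌋₊ (2 ^ m - 1) = 2 ^ m - 1 := by omega
    rw [hmin] at htop ⊢
    have hfl : 2 ^ m - 1 ≤ ⌊x * 2 ^ m⌋₊ := by omega
    have : ((2 ^ m - 1 : ℕ) : ℝ) ≤ x * 2 ^ m := by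
      calc ((2 ^ m - 1 : ℕ) : ℝ) ≤ (⌊x * 2 ^ m⌋₊ : ℝ) := by exact_mod_cast hfl
        _ ≤ x * 2 ^ m := Nat.floor_le hxn
    constructor
    · rw [div_le_iff₀ h2]; exact this
    · exact hx.2
  · rw [dyI, if_neg htop]
    have hmin : min ⌊x * 2 ^ m⌋₊ (2 ^ m - 1) = ⌊x * 2 ^ m⌋₊ := by
      rcases Nat.le_total ⌊x * 2 ^ m⌋₊ (2 ^ m - 1) with h | h
      · exact min_eq_left h
      · exfalso; apply htop; have : min ⌊x * 2 ^ m⌋₊ (2 ^ m - 1) = 2 ^ m - 1 := min_eq_right h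
        rw [this]; have : 0 < 2 ^ m := Nat.pow_pos (by norm_num); omega
    rw [hmin]
    constructor
    · rw [div_le_iff₀ h2]; exact Nat.floor_le hxn
    · rw [lt_div_iff₀ h2]
      exact_mod_cast Nat.lt_floor_add_one (x * 2 ^ m)

lemma dyI_eq_of_mem {m k k' : ℕ} (hk : k < 2 ^ m) (hk' : k' < 2 ^ m) {x : ℝ}
    (h1 : x ∈ dyI m k) (h2 : x ∈ dyI m k') : k = k' := by
  have h2m : (0:ℝ) < 2 ^ m := by positivity
  -- from membership: k/2^m ≤ x and (x < (k+1)/2^m unless k top, in which case x ≤ 1)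
  have key : ∀ a : ℕ, a < 2 ^ m → ∀ y : ℝ, y ∈ dyI m a →
      (a : ℝ) / 2 ^ m ≤ y ∧ (y < ((a:ℝ)+1) / 2 ^ m ∨ (a + 1 = 2 ^ m ∧ y ≤ 1)) := by
    intro a ha y hy
    unfold dyI at hy
    split at hy
    · exact ⟨hy.1, Or.inr ⟨by assumption, hy.2⟩⟩
    · exact ⟨hy.1, Or.inl hy.2⟩
  by_contra hne
  wlog hlt : k < k' generalizing k k' x
  · exact this hk' hk h2 h1 (Ne.symm hne) (by omega)
  obtain ⟨hge1, hc1⟩ := key k hk x h1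
  obtain ⟨hge2, hc2⟩ := key k' hk' x h2
  rcases hc1 with hlt1 | ⟨htop, _⟩
  · have : ((k:ℝ)+1) / 2 ^ m ≤ (k' : ℝ) / 2 ^ m := by
      have hk1k : (k:ℝ) + 1 ≤ (k' : ℝ) := by exact_mod_cast hlt
      apply div_le_div_of_nonneg_right hk1k h2m.le
    linarith [hge2]
  · omega

lemma mem_dyCell_cellIndexOf {d : ℕ} (m : Fin d → ℕ) {w : Fin d → ℝ}
    (hw : ∀ j, w j ∈ Set.Icc (0:ℝ) 1) : w ∈ dyCell m (cellIndexOf m w) :=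
  fun j => mem_dyI_of_mem_Icc (hw j)

lemma cellIndexOf_eq_of_mem {d : ℕ} {m : Fin d → ℕ} {w : Fin d → ℝ}
    (hw : ∀ j, w j ∈ Set.Icc (0:ℝ) 1) {k : ∀ j, Fin (2 ^ m j)}
    (hk : w ∈ dyCell m k) : cellIndexOf m w = k := by
  funext j
  exact Fin.ext (dyI_eq_of_mem (cellIndexOf m w j).isLt (k j).isLt
    (mem_dyCell_cellIndexOf m hw j) (hk j))

lemma W1_le_of_coupling {Y : Type*} [MeasurableSpace Y] [PseudoMetricSpace Y]
    {η ζ : Measure Y} (π : Measure (Y × Y))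
    (h1 : π.map Prod.fst = η) (h2 : π.map Prod.snd = ζ) :
    W1 η ζ ≤ ∫ q, dist q.1 q.2 ∂π := by
  apply csInf_le
  · refine ⟨0, ?_⟩
    rintro x ⟨g, -, rfl⟩
    exact integral_nonneg fun q => dist_nonneg
  · exact ⟨π, ⟨h1, h2⟩, rfl⟩

lemma W1_nonneg {Y : Type*} [MeasurableSpace Y] [PseudoMetricSpace Y]
    (η ζ : Measure Y) : 0 ≤ W1 η ζ := by
  apply Real.sInf_nonneg
  rintro x ⟨g, -, rfl⟩
  exact integral_nonneg fun q => dist_nonneg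

lemma W1_mix_le {Y : Type*} [MeasurableSpace Y] [PseudoMetricSpace Y]
    [OpensMeasurableSpace Y] [SecondCountableTopology Y]
    {ι : Type*} [Fintype ι] (ν : ι → Measure Y) [∀ k, IsProbabilityMeasure (ν k)]
    (a b : ι → ℝ) (ha0 : ∀ k, 0 ≤ a k) (hb0 : ∀ k, 0 ≤ b k)
    (ha1 : ∑ k, a k = 1) (hb1 : ∑ k, b k = 1)
    (D : ℝ) (hD0 : 0 ≤ D) (hD : ∀ x y : Y, dist x y ≤ D) :
    W1 (∑ k, ENNReal.ofReal (a k) • ν k) (∑ k, ENNReal.ofReal (b k) • ν k)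
      ≤ D * ∑ k, |a k - b k| := by
  classical
  have hdm : Measurable fun q : Y × Y => ENNReal.ofReal (dist q.1 q.2) :=
    ENNReal.measurable_ofReal.comp measurable_dist
  have hΔ : Measurable fun y : Y => (y, y) := measurable_id.prodMk measurable_id
  have hint : ∀ π : Measure (Y × Y),
      ∫ q, dist q.1 q.2 ∂π = (∫⁻ q, ENNReal.ofReal (dist q.1 q.2) ∂π).toReal := fun π =>
    integral_eq_lintegral_of_nonneg_ae (Filter.Eventually.of_forall fun q => dist_nonneg)
      measurable_dist.aestronglyMeasurable
  have hdiagcost : ∀ (w : ι → ℝ≥0∞),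
      (∫⁻ q, ENNReal.ofReal (dist q.1 q.2)
        ∂(∑ k, w k • (ν k).map (fun y => (y, y)))) = 0 := by
    intro w
    rw [lintegral_finset_sum_measure]
    refine Finset.sum_eq_zero fun k _ => ?_
    rw [lintegral_smul_measure, lintegral_map hdm hΔ]
    simp
  have hfst_diag : ∀ (w : ι → ℝ≥0∞),
      (∑ k, w k • (ν k).map (fun y : Y => (y, y))).map Prod.fst = ∑ k, w k • ν k := by
    intro w
    ext s hs
    rw [Measure.map_apply measurable_fst hs, Measure.finset_sum_apply,
      Measure.finset_sum_apply]
    refine Finset.sum_congr rfl fun k _ => ?_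
    rw [Measure.smul_apply, Measure.smul_apply,
      Measure.map_apply hΔ (measurable_fst hs),
      show (fun y : Y => (y, y)) ⁻¹' (Prod.fst ⁻¹' s) = s from by ext y; simp]
  have hsnd_diag : ∀ (w : ι → ℝ≥0∞),
      (∑ k, w k • (ν k).map (fun y : Y => (y, y))).map Prod.snd = ∑ k, w k • ν k := by
    intro w
    ext s hs
    rw [Measure.map_apply measurable_snd hs, Measure.finset_sum_apply,
      Measure.finset_sum_apply]
    refine Finset.sum_congr rfl fun k _ => ?_
    rw [Measure.smul_apply, Measure.smul_apply,
      Measure.map_apply hΔ (measurable_snd hs),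
      show (fun y : Y => (y, y)) ⁻¹' (Prod.snd ⁻¹' s) = s from by ext y; simp]
  set c : ι → ℝ := fun k => min (a k) (b k) with hc
  have hc0 : ∀ k, 0 ≤ c k := fun k => le_min (ha0 k) (hb0 k)
  have hca : ∀ k, c k ≤ a k := fun k => min_le_left _ _
  have hcb : ∀ k, c k ≤ b k := fun k => min_le_right _ _
  set r : ℝ := ∑ k, (a k - c k) with hrdef
  have hr2 : ∑ k, (b k - c k) = r := by
    rw [hrdef, Finset.sum_sub_distrib, Finset.sum_sub_distrib, ha1, hb1]
  have hr0 : 0 ≤ r := Finset.sum_nonneg fun k _ => sub_nonneg.mpr (hca k)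
  have hrle : r ≤ ∑ k, |a k - b k| := by
    refine Finset.sum_le_sum fun k _ => ?_
    rcases le_total (a k) (b k) with h | h
    · simp [hc, min_eq_left h, abs_nonneg]
    · rw [hc]; simp only [min_eq_right h]; exact le_abs_self _
  by_cases hr : r = 0
  · -- a = b, use the diagonal coupling
    have hab : ∀ k, a k = b k := by
      intro k
      have h1 : ∀ k ∈ Finset.univ, a k - c k = 0 :=
        (Finset.sum_eq_zero_iff_of_nonneg
          (fun k _ => sub_nonneg.mpr (hca k))).mp (hrdef ▸ hr)
      have h2 : ∀ k ∈ Finset.univ, b k - c k = 0 :=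
        (Finset.sum_eq_zero_iff_of_nonneg
          (fun k _ => sub_nonneg.mpr (hcb k))).mp (by rw [hr2]; exact hr)
      have := h1 k (Finset.mem_univ k); have := h2 k (Finset.mem_univ k)
      linarith
    have habm : (∑ k, ENNReal.ofReal (b k) • ν k) = ∑ k, ENNReal.ofReal (a k) • ν k := by
      simp [hab]
    set π : Measure (Y × Y) := ∑ k, ENNReal.ofReal (a k) • (ν k).map (fun y => (y, y))
    have hcost : ∫ q, dist q.1 q.2 ∂π = 0 := by
      rw [hint, hdiagcost]; simp
    calc W1 _ _ ≤ ∫ q, dist q.1 q.2 ∂π :=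
          W1_le_of_coupling π (hfst_diag _) (by rw [habm]; exact hsnd_diag _)
      _ = 0 := hcost
      _ ≤ D * ∑ k, |a k - b k| := by positivity
  · have hrpos : 0 < r := lt_of_le_of_ne hr0 (Ne.symm hr)
    set μa : Measure Y := ∑ k, ENNReal.ofReal (a k - c k) • ν k with hμa
    set μb : Measure Y := ∑ k, ENNReal.ofReal (b k - c k) • ν k with hμb
    have hμa_univ : μa Set.univ = ENNReal.ofReal r := by
      rw [hμa, Measure.finset_sum_apply]
      simp only [Measure.smul_apply, measure_univ, smul_eq_mul, mul_one]
      rw [← ENNReal.ofReal_sum_of_nonneg fun k _ => sub_nonneg.mpr (hca k)]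
    have hμb_univ : μb Set.univ = ENNReal.ofReal r := by
      rw [hμb, Measure.finset_sum_apply]
      simp only [Measure.smul_apply, measure_univ, smul_eq_mul, mul_one]
      rw [← ENNReal.ofReal_sum_of_nonneg fun k _ => sub_nonneg.mpr (hcb k), hr2]
    haveI : IsFiniteMeasure μa := ⟨by rw [hμa_univ]; exact ENNReal.ofReal_lt_top⟩
    haveI : IsFiniteMeasure μb := ⟨by rw [hμb_univ]; exact ENNReal.ofReal_lt_top⟩
    have hrne : ENNReal.ofReal r ≠ 0 := by
      simp [ENNReal.ofReal_eq_zero]; linarith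
    set diag : Measure (Y × Y) :=
      ∑ k, ENNReal.ofReal (c k) • (ν k).map (fun y => (y, y)) with hdiag
    set cross : Measure (Y × Y) := (ENNReal.ofReal r)⁻¹ • (μa.prod μb) with hcross
    set π : Measure (Y × Y) := diag + cross with hπ
    have hmix : ∀ w : ι → ℝ, (∀ k, c k ≤ w k) →
        (∑ k, ENNReal.ofReal (c k) • ν k) + (∑ k, ENNReal.ofReal (w k - c k) • ν k)
          = ∑ k, ENNReal.ofReal (w k) • ν k := by
      intro w hw
      rw [← Finset.sum_add_distrib]
      refine Finset.sum_congr rfl fun k _ => ?_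
      rw [← add_smul, ← ENNReal.ofReal_add (hc0 k) (sub_nonneg.mpr (hw k)),
        add_sub_cancel]
    have hcancel : (ENNReal.ofReal r)⁻¹ * ENNReal.ofReal r = 1 :=
      ENNReal.inv_mul_cancel hrne ENNReal.ofReal_ne_top
    have hfst : π.map Prod.fst = ∑ k, ENNReal.ofReal (a k) • ν k := by
      rw [hπ, Measure.map_add _ _ measurable_fst, hcross,
        Measure.map_smul, Measure.map_fst_prod, hμb_univ, smul_smul, hcancel, one_smul,
        hdiag, hfst_diag]
      exact hmix a hca
    have hsnd : π.map Prod.snd = ∑ k, ENNReal.ofReal (b k) • ν k := by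
      rw [hπ, Measure.map_add _ _ measurable_snd, hcross,
        Measure.map_smul, Measure.map_snd_prod, hμa_univ, smul_smul, hcancel, one_smul,
        hdiag, hsnd_diag]
      exact hmix b hcb
    have hprod_univ : (μa.prod μb) Set.univ = ENNReal.ofReal r * ENNReal.ofReal r := by
      rw [← Set.univ_prod_univ, Measure.prod_prod, hμa_univ, hμb_univ]
    have hcost : ∫ q, dist q.1 q.2 ∂π ≤ D * r := by
      rw [hint]
      refine ENNReal.toReal_le_of_le_ofReal (by positivity) ?_
      rw [hπ, lintegral_add_measure, hdiag, hdiagcost, zero_add, hcross,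
        lintegral_smul_measure]
      have hb : (∫⁻ q : Y × Y, ENNReal.ofReal (dist q.1 q.2) ∂(μa.prod μb))
          ≤ ENNReal.ofReal D * (ENNReal.ofReal r * ENNReal.ofReal r) := by
        calc (∫⁻ q : Y × Y, ENNReal.ofReal (dist q.1 q.2) ∂(μa.prod μb))
            ≤ ∫⁻ _ : Y × Y, ENNReal.ofReal D ∂(μa.prod μb) :=
              lintegral_mono fun q => ENNReal.ofReal_le_ofReal (hD _ _)
          _ = ENNReal.ofReal D * (ENNReal.ofReal r * ENNReal.ofReal r) := by
              rw [lintegral_const, hprod_univ]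
      calc (ENNReal.ofReal r)⁻¹ * (∫⁻ q : Y × Y, ENNReal.ofReal (dist q.1 q.2) ∂(μa.prod μb))
          ≤ (ENNReal.ofReal r)⁻¹ * (ENNReal.ofReal D * (ENNReal.ofReal r * ENNReal.ofReal r)) :=
            mul_le_mul_right hb _
        _ = (ENNReal.ofReal D * ENNReal.ofReal r) * ((ENNReal.ofReal r)⁻¹ * ENNReal.ofReal r) := by
            ring
        _ = ENNReal.ofReal D * ENNReal.ofReal r := by rw [hcancel, mul_one]
        _ = ENNReal.ofReal (D * r) := (ENNReal.ofReal_mul hD0).symm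
    calc W1 _ _ ≤ ∫ q, dist q.1 q.2 ∂π := W1_le_of_coupling π hfst hsnd
      _ ≤ D * r := hcost
      _ ≤ D * ∑ k, |a k - b k| := mul_le_mul_of_nonneg_left hrle hD0

lemma bind_mix {W Y ι : Type*} [MeasurableSpace W] [MeasurableSpace Y] [Fintype ι]
    (μ : Measure W) (ν : ι → Measure Y) (g : ι → W → ℝ) (hg : ∀ k, Measurable (g k)) :
    μ.bind (fun w => ∑ k, ENNReal.ofReal (g k w) • ν k)
      = ∑ k, (∫⁻ w, ENNReal.ofReal (g k w) ∂μ) • ν k := by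
  have hf : Measurable (fun w => ∑ k, ENNReal.ofReal (g k w) • ν k) := by
    refine Measure.measurable_of_measurable_coe _ fun s hs => ?_
    simp only [Measure.finset_sum_apply, Measure.smul_apply, smul_eq_mul]
    exact Finset.measurable_sum _ fun k _ =>
      ((ENNReal.measurable_ofReal.comp (hg k)).mul_const _)
  ext s hs
  rw [Measure.bind_apply hs hf.aemeasurable, Measure.finset_sum_apply]
  simp only [Measure.finset_sum_apply, Measure.smul_apply, smul_eq_mul]
  rw [lintegral_finset_sum _ fun k _ => (hg k).ennreal_ofReal.mul_const ((ν k) s)]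
  exact Finset.sum_congr rfl fun k _ => lintegral_mul_const _ (hg k).ennreal_ofReal

theorem stmt13 (d : ℕ) (hd : 0 < d)
    {p : ℕ} (K : Set (EuclideanSpace ℝ (Fin p))) (hK : IsCompact K)
    (m : Fin d → ℕ)
    (Qρ : Measure (Fin d → ℝ)) [IsProbabilityMeasure Qρ]
    (hcube : Qρ {w | ∀ j, w j ∈ Set.Icc (0 : ℝ) 1} = 1)
    (hpos : ∀ k : (∀ j, Fin (2 ^ m j)), 0 < Qρ (dyCell m k))
    (γ : (∀ j, Fin (2 ^ m j)) → (Fin d → ℝ) → ℝ)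
    (hγmeas : ∀ k, Measurable (γ k))
    (hγ01 : ∀ k w, γ k w ∈ Set.Icc (0 : ℝ) 1)
    (hγsum : ∀ w, ∑ k, γ k w = 1)
    (ν : (∀ j, Fin (2 ^ m j)) → Measure ↥K)
    [∀ k, IsProbabilityMeasure (ν k)] :
    -- soft law, its cell averages, integrated gate error
    (∑ k, (Qρ (dyCell m k)).toReal *
        W1 ((Qρ (dyCell m k))⁻¹ •
              (Qρ.restrict (dyCell m k)).bind
                (fun w => ∑ k', ENNReal.ofReal (γ k' w) • ν k'))
          (ν k)
      ≤ Metric.diam (Set.univ : Set ↥K) *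
          ∫ w, ∑ k, |γ k w - Set.indicator (dyCell m k) (fun _ => (1 : ℝ)) w| ∂Qρ) ∧
    (∫ w, W1 (∑ k', ENNReal.ofReal (γ k' w) • ν k')
        ((Qρ (dyCell m (cellIndexOf m w)))⁻¹ •
          (Qρ.restrict (dyCell m (cellIndexOf m w))).bind
            (fun w' => ∑ k', ENNReal.ofReal (γ k' w') • ν k')) ∂Qρ
      ≤ 2 * Metric.diam (Set.univ : Set ↥K) *
          ∫ w, ∑ k, |γ k w - Set.indicator (dyCell m k) (fun _ => (1 : ℝ)) w| ∂Qρ) := by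
    classical
  haveI : CompactSpace ↥K := isCompact_iff_compactSpace.mp hK
  haveI : BorelSpace ↥K := Subtype.borelSpace K
  set D := Metric.diam (Set.univ : Set ↥K) with hDdef
  have hD0 : 0 ≤ D := Metric.diam_nonneg
  have hDle : ∀ x y : ↥K, dist x y ≤ D := fun x y =>
    Metric.dist_le_diam_of_mem isCompact_univ.isBounded (Set.mem_univ x) (Set.mem_univ y)
  -- the unit cube
  have hcube_meas : MeasurableSet {w : Fin d → ℝ | ∀ j, w j ∈ Set.Icc (0:ℝ) 1} := by
    have h : {w : Fin d → ℝ | ∀ j, w j ∈ Set.Icc (0:ℝ) 1}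
        = ⋂ j, (fun w : Fin d → ℝ => w j) ⁻¹' Set.Icc 0 1 := by ext w; simp
    rw [h]
    exact MeasurableSet.iInter fun j => (measurable_pi_apply j) measurableSet_Icc
  have hcube_ae : ∀ᵐ w ∂Qρ, ∀ j, w j ∈ Set.Icc (0:ℝ) 1 := by
    rw [ae_iff]
    have h : {w : Fin d → ℝ | ¬ ∀ j, w j ∈ Set.Icc (0:ℝ) 1}
        = {w : Fin d → ℝ | ∀ j, w j ∈ Set.Icc (0:ℝ) 1}ᶜ := rfl
    rw [h, measure_compl hcube_meas (measure_ne_top _ _), hcube, measure_univ, tsub_self]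
  -- basic cell facts
  have hq0 : ∀ k : (∀ j, Fin (2 ^ m j)), Qρ (dyCell m k) ≠ 0 := fun k => (hpos k).ne'
  have hqt : ∀ k : (∀ j, Fin (2 ^ m j)), Qρ (dyCell m k) ≠ ⊤ := fun k => measure_ne_top _ _
  set gbar : (∀ j, Fin (2 ^ m j)) → (∀ j, Fin (2 ^ m j)) → ℝ := fun k k' =>
    ((Qρ (dyCell m k))⁻¹ *
      ∫⁻ w, ENNReal.ofReal (γ k' w) ∂(Qρ.restrict (dyCell m k))).toReal with hgbar_def
  have hIle : ∀ k k' : (∀ j, Fin (2 ^ m j)),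
      (∫⁻ w, ENNReal.ofReal (γ k' w) ∂(Qρ.restrict (dyCell m k))) ≤ Qρ (dyCell m k) := by
    intro k k'
    calc (∫⁻ w, ENNReal.ofReal (γ k' w) ∂(Qρ.restrict (dyCell m k)))
        ≤ ∫⁻ _, 1 ∂(Qρ.restrict (dyCell m k)) :=
          lintegral_mono fun w => ENNReal.ofReal_le_one.mpr (hγ01 k' w).2
      _ = Qρ (dyCell m k) := by rw [lintegral_one, Measure.restrict_apply_univ]
  have hInetop : ∀ k k' : (∀ j, Fin (2 ^ m j)),
      (∫⁻ w, ENNReal.ofReal (γ k' w) ∂(Qρ.restrict (dyCell m k))) ≠ ⊤ :=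
    fun k k' => ((hIle k k').trans_lt (lt_top_iff_ne_top.mpr (hqt k))).ne
  have hmulnetop : ∀ k k' : (∀ j, Fin (2 ^ m j)),
      (Qρ (dyCell m k))⁻¹ *
        (∫⁻ w, ENNReal.ofReal (γ k' w) ∂(Qρ.restrict (dyCell m k))) ≠ ⊤ :=
    fun k k' => ENNReal.mul_ne_top (ENNReal.inv_ne_top.mpr (hq0 k)) (hInetop k k')
  have hbind' : ∀ k : (∀ j, Fin (2 ^ m j)),
      (Qρ (dyCell m k))⁻¹ •
          (Qρ.restrict (dyCell m k)).bind
            (fun w => ∑ k', ENNReal.ofReal (γ k' w) • ν k')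
        = ∑ k', ENNReal.ofReal (gbar k k') • ν k' := by
    intro k
    rw [bind_mix _ ν γ hγmeas, Finset.smul_sum]
    refine Finset.sum_congr rfl fun k' _ => ?_
    rw [smul_smul]
    congr 1
    simp only [hgbar_def]
    exact (ENNReal.ofReal_toReal (hmulnetop k k')).symm
  have hIsum : ∀ k : (∀ j, Fin (2 ^ m j)),
      (∑ k', ∫⁻ w, ENNReal.ofReal (γ k' w) ∂(Qρ.restrict (dyCell m k)))
        = Qρ (dyCell m k) := by
    intro k
    rw [← lintegral_finset_sum _ fun k' _ => (hγmeas k').ennreal_ofReal]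
    have h1 : ∀ w, (∑ k', ENNReal.ofReal (γ k' w)) = 1 := fun w => by
      rw [← ENNReal.ofReal_sum_of_nonneg fun k' _ => (hγ01 k' w).1, hγsum w,
        ENNReal.ofReal_one]
    simp_rw [h1]
    rw [lintegral_one, Measure.restrict_apply_univ]
  have hgbar0 : ∀ k k' : (∀ j, Fin (2 ^ m j)), 0 ≤ gbar k k' :=
    fun k k' => ENNReal.toReal_nonneg
  have hgbar1 : ∀ k : (∀ j, Fin (2 ^ m j)), ∑ k', gbar k k' = 1 := by
    intro k
    simp only [hgbar_def]
    rw [← ENNReal.toReal_sum fun k' _ => hmulnetop k k', ← Finset.mul_sum, hIsum k,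
      ENNReal.inv_mul_cancel (hq0 k) (hqt k), ENNReal.toReal_one]
  -- hard gate weights
  set e : (∀ j, Fin (2 ^ m j)) → (∀ j, Fin (2 ^ m j)) → ℝ :=
    fun k₀ k => if k = k₀ then 1 else 0 with he_def
  have he0 : ∀ k₀ k, 0 ≤ e k₀ k := by
    intro k₀ k; simp only [he_def]; split <;> norm_num
  have he1 : ∀ k₀, ∑ k, e k₀ k = 1 := by intro k₀; simp [he_def]
  have he_mix : ∀ k₀ : (∀ j, Fin (2 ^ m j)),
      (∑ k', ENNReal.ofReal (e k₀ k') • ν k') = ν k₀ := by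
    intro k₀
    rw [Finset.sum_eq_single k₀]
    · simp [he_def]
    · intro k' _ hk'; simp [he_def, hk']
    · intro h; exact absurd (Finset.mem_univ k₀) h
  have habs : ∀ v : (∀ j, Fin (2 ^ m j)) → ℝ, (∀ k, 0 ≤ v k) → (∑ k, v k = 1) →
      ∀ k₀, (∑ k, |v k - e k₀ k|) = 2 * (1 - v k₀) := by
    intro v hv0 hv1 k₀
    have hle1 : v k₀ ≤ 1 := by
      have := Finset.single_le_sum (f := v) (fun k _ => hv0 k) (Finset.mem_univ k₀)
      linarith [hv1 ▸ this]
    rw [← Finset.add_sum_erase _ _ (Finset.mem_univ k₀)]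
    have h1 : |v k₀ - e k₀ k₀| = 1 - v k₀ := by
      simp only [he_def, if_pos rfl]
      rw [abs_sub_comm, abs_of_nonneg (by linarith)]
    have h2 : (∑ k ∈ Finset.univ.erase k₀, |v k - e k₀ k|)
        = ∑ k ∈ Finset.univ.erase k₀, v k := by
      refine Finset.sum_congr rfl fun k hk => ?_
      have hkk : k ≠ k₀ := Finset.ne_of_mem_erase hk
      simp [he_def, hkk, abs_of_nonneg (hv0 k)]
    have h3 : v k₀ + ∑ k ∈ Finset.univ.erase k₀, v k = 1 := by
      rw [Finset.add_sum_erase _ _ (Finset.mem_univ k₀)]; exact hv1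
    rw [h1, h2]; linarith
  have hind : ∀ w : Fin d → ℝ, (∀ j, w j ∈ Set.Icc (0:ℝ) 1) →
      ∀ k, Set.indicator (dyCell m k) (fun _ => (1:ℝ)) w = e (cellIndexOf m w) k := by
    intro w hw k
    by_cases hmem : w ∈ dyCell m k
    · rw [Set.indicator_of_mem hmem]
      simp [he_def, cellIndexOf_eq_of_mem hw hmem]
    · rw [Set.indicator_of_notMem hmem]
      have hne : k ≠ cellIndexOf m w := fun h => hmem (h ▸ mem_dyCell_cellIndexOf m hw)
      simp [he_def, hne]
  -- pointwise identity for the gate error integrand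
  have hη1 : ∀ᵐ w ∂Qρ,
      (∑ k, |γ k w - Set.indicator (dyCell m k) (fun _ => (1:ℝ)) w|)
        = ∑ k, Set.indicator (dyCell m k) (fun w' => 2 * (1 - γ k w')) w := by
    filter_upwards [hcube_ae] with w hw
    calc (∑ k, |γ k w - Set.indicator (dyCell m k) (fun _ => (1:ℝ)) w|)
        = ∑ k, |γ k w - e (cellIndexOf m w) k| :=
          Finset.sum_congr rfl fun k _ => by rw [hind w hw k]
      _ = 2 * (1 - γ (cellIndexOf m w) w) :=
          habs (fun k => γ k w) (fun k => (hγ01 k w).1) (hγsum w) _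
      _ = ∑ k, Set.indicator (dyCell m k) (fun w' => 2 * (1 - γ k w')) w := by
          rw [Finset.sum_eq_single (cellIndexOf m w)]
          · rw [Set.indicator_of_mem (mem_dyCell_cellIndexOf m hw)]
          · intro k _ hk
            exact Set.indicator_of_notMem
              (fun hmem => hk (cellIndexOf_eq_of_mem hw hmem).symm) _
          · intro h; exact absurd (Finset.mem_univ _) h
  -- integrability helpers
  have hbd1 : ∀ (k : ∀ j, Fin (2 ^ m j)) (w : Fin d → ℝ),
      |γ k w - Set.indicator (dyCell m k) (fun _ => (1:ℝ)) w| ≤ 1 := by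
    intro k w
    have h01 := hγ01 k w
    by_cases hmem : w ∈ dyCell m k
    · rw [Set.indicator_of_mem hmem]
      rw [abs_sub_comm, abs_of_nonneg (by linarith [h01.2])]; linarith [h01.1]
    · rw [Set.indicator_of_notMem hmem, sub_zero, abs_of_nonneg h01.1]
      exact h01.2
  have hmeas_ind : ∀ k : (∀ j, Fin (2 ^ m j)),
      Measurable (fun w => Set.indicator (dyCell m k) (fun _ => (1:ℝ)) w) :=
    fun k => measurable_const.indicator (measurableSet_dyCell m k)
  have hint1 : ∀ k : (∀ j, Fin (2 ^ m j)),
      Integrable (fun w => |γ k w - Set.indicator (dyCell m k) (fun _ => (1:ℝ)) w|) Qρ := by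
    intro k
    refine Integrable.mono' (integrable_const 1)
      (((hγmeas k).sub (hmeas_ind k)).abs.aestronglyMeasurable)
      (Filter.Eventually.of_forall fun w => ?_)
    rw [Real.norm_eq_abs, abs_abs]
    exact hbd1 k w
  have hint2 : ∀ k : (∀ j, Fin (2 ^ m j)),
      Integrable (fun w => Set.indicator (dyCell m k) (fun w' => 2 * (1 - γ k w')) w) Qρ := by
    intro k
    refine Integrable.indicator ?_ (measurableSet_dyCell m k)
    refine Integrable.mono' (integrable_const 2)
      ((measurable_const.sub (hγmeas k)).const_mul 2).aestronglyMeasurable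
      (Filter.Eventually.of_forall fun w => ?_)
    have h01 := hγ01 k w
    rw [Real.norm_eq_abs, abs_of_nonneg (by linarith [h01.2])]
    linarith [h01.1]
  have hγint : ∀ (k : ∀ j, Fin (2 ^ m j)) (s : Set (Fin d → ℝ)),
      Integrable (γ k) (Qρ.restrict s) := by
    intro k s
    refine Integrable.mono' (integrable_const 1) (hγmeas k).aestronglyMeasurable
      (Filter.Eventually.of_forall fun w => ?_)
    have h01 := hγ01 k w
    rw [Real.norm_eq_abs, abs_of_nonneg h01.1]
    exact h01.2
  have hIint : ∀ k k' : (∀ j, Fin (2 ^ m j)),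
      (∫⁻ w, ENNReal.ofReal (γ k' w) ∂(Qρ.restrict (dyCell m k))).toReal
        = ∫ w in dyCell m k, γ k' w ∂Qρ :=
    fun k k' => (integral_eq_lintegral_of_nonneg_ae
      (Filter.Eventually.of_forall fun w => (hγ01 k' w).1)
      (hγmeas k').aestronglyMeasurable).symm
  have hqgbar : ∀ k : (∀ j, Fin (2 ^ m j)),
      (Qρ (dyCell m k)).toReal * gbar k k
        = (∫⁻ w, ENNReal.ofReal (γ k w) ∂(Qρ.restrict (dyCell m k))).toReal := by
    intro k
    simp only [hgbar_def]
    rw [← ENNReal.toReal_mul, ← mul_assoc, ENNReal.mul_inv_cancel (hq0 k) (hqt k), one_mul]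
  -- the integrated gate error
  have hη : (∫ w, ∑ k, |γ k w - Set.indicator (dyCell m k) (fun _ => (1:ℝ)) w| ∂Qρ)
      = ∑ k, 2 * ((Qρ (dyCell m k)).toReal - ∫ w in dyCell m k, γ k w ∂Qρ) := by
    rw [integral_congr_ae hη1, integral_finset_sum _ fun k _ => hint2 k]
    refine Finset.sum_congr rfl fun k _ => ?_
    rw [integral_indicator (measurableSet_dyCell m k)]
    have hsub : ∀ w, 2 * (1 - γ k w) = 2 * ((1:ℝ) - γ k w) := fun w => rfl
    rw [MeasureTheory.integral_const_mul]
    congr 1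
    rw [integral_sub (integrable_const 1) (hγint k _), integral_const,
      measureReal_def, Measure.restrict_apply_univ, smul_eq_mul, mul_one]
  -- cellwise W1 bound
  have hW1cell : ∀ k : (∀ j, Fin (2 ^ m j)),
      W1 (∑ k', ENNReal.ofReal (gbar k k') • ν k') (ν k) ≤ D * (2 * (1 - gbar k k)) := by
    intro k
    rw [← he_mix k]
    calc W1 (∑ k', ENNReal.ofReal (gbar k k') • ν k')
          (∑ k', ENNReal.ofReal (e k k') • ν k')
        ≤ D * ∑ k', |gbar k k' - e k k'| :=
          W1_mix_le ν (gbar k) (e k) (hgbar0 k) (he0 k) (hgbar1 k) (he1 k) D hD0 hDle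
      _ = D * (2 * (1 - gbar k k)) := by rw [habs (gbar k) (hgbar0 k) (hgbar1 k) k]
  have hkey : (∑ k, (Qρ (dyCell m k)).toReal * (D * (2 * (1 - gbar k k))))
      = D * ∫ w, ∑ k, |γ k w - Set.indicator (dyCell m k) (fun _ => (1:ℝ)) w| ∂Qρ := by
    rw [hη, Finset.mul_sum]
    refine Finset.sum_congr rfl fun k _ => ?_
    have hr : (Qρ (dyCell m k)).toReal * (D * (2 * (1 - gbar k k)))
        = D * (2 * ((Qρ (dyCell m k)).toReal - (Qρ (dyCell m k)).toReal * gbar k k)) := by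
      ring
    rw [hr, hqgbar k, hIint k k]
  constructor
  · -- part (i)
    calc (∑ k, (Qρ (dyCell m k)).toReal *
          W1 ((Qρ (dyCell m k))⁻¹ •
                (Qρ.restrict (dyCell m k)).bind
                  (fun w => ∑ k', ENNReal.ofReal (γ k' w) • ν k'))
            (ν k))
        ≤ ∑ k, (Qρ (dyCell m k)).toReal * (D * (2 * (1 - gbar k k))) := by
          refine Finset.sum_le_sum fun k _ => ?_
          refine mul_le_mul_of_nonneg_left ?_ ENNReal.toReal_nonneg
          rw [hbind' k]
          exact hW1cell k
      _ = D * ∫ w, ∑ k, |γ k w - Set.indicator (dyCell m k) (fun _ => (1:ℝ)) w| ∂Qρ := hkey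
  · -- part (ii)
    have hgle : ∀ᵐ w ∂Qρ,
        W1 (∑ k', ENNReal.ofReal (γ k' w) • ν k')
            ((Qρ (dyCell m (cellIndexOf m w)))⁻¹ •
              (Qρ.restrict (dyCell m (cellIndexOf m w))).bind
                (fun w' => ∑ k', ENNReal.ofReal (γ k' w') • ν k'))
          ≤ D * ((∑ k, |γ k w - Set.indicator (dyCell m k) (fun _ => (1:ℝ)) w|)
              + ∑ k, Set.indicator (dyCell m k) (fun _ => 2 * (1 - gbar k k)) w) := by
      filter_upwards [hcube_ae] with w hw
      rw [hbind' (cellIndexOf m w)]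
      calc W1 (∑ k', ENNReal.ofReal (γ k' w) • ν k')
            (∑ k', ENNReal.ofReal (gbar (cellIndexOf m w) k') • ν k')
          ≤ D * ∑ k, |γ k w - gbar (cellIndexOf m w) k| :=
            W1_mix_le ν (fun k => γ k w) (gbar (cellIndexOf m w))
              (fun k => (hγ01 k w).1) (hgbar0 _) (hγsum w) (hgbar1 _) D hD0 hDle
        _ ≤ D * ((∑ k, |γ k w - Set.indicator (dyCell m k) (fun _ => (1:ℝ)) w|)
              + ∑ k, Set.indicator (dyCell m k) (fun _ => 2 * (1 - gbar k k)) w) := by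
            refine mul_le_mul_of_nonneg_left ?_ hD0
            calc (∑ k, |γ k w - gbar (cellIndexOf m w) k|)
                ≤ ∑ k, (|γ k w - e (cellIndexOf m w) k|
                    + |e (cellIndexOf m w) k - gbar (cellIndexOf m w) k|) :=
                  Finset.sum_le_sum fun k _ => abs_sub_le _ _ _
              _ = (∑ k, |γ k w - e (cellIndexOf m w) k|)
                  + ∑ k, |e (cellIndexOf m w) k - gbar (cellIndexOf m w) k| :=
                  Finset.sum_add_distrib
              _ = (∑ k, |γ k w - Set.indicator (dyCell m k) (fun _ => (1:ℝ)) w|)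
                  + ∑ k, Set.indicator (dyCell m k) (fun _ => 2 * (1 - gbar k k)) w := by
                  congr 1
                  · exact Finset.sum_congr rfl fun k _ => by rw [hind w hw k]
                  · calc (∑ k, |e (cellIndexOf m w) k - gbar (cellIndexOf m w) k|)
                        = ∑ k, |gbar (cellIndexOf m w) k - e (cellIndexOf m w) k| :=
                          Finset.sum_congr rfl fun k _ => abs_sub_comm _ _
                      _ = 2 * (1 - gbar (cellIndexOf m w) (cellIndexOf m w)) :=
                          habs _ (hgbar0 _) (hgbar1 _) _
                      _ = ∑ k, Set.indicator (dyCell m k)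
                            (fun _ => 2 * (1 - gbar k k)) w := by
                          rw [Finset.sum_eq_single (cellIndexOf m w)]
                          · rw [Set.indicator_of_mem (mem_dyCell_cellIndexOf m hw)]
                          · intro k _ hk
                            exact Set.indicator_of_notMem
                              (fun hmem => hk (cellIndexOf_eq_of_mem hw hmem).symm) _
                          · intro h; exact absurd (Finset.mem_univ _) h
    have hint3 : ∀ k : (∀ j, Fin (2 ^ m j)),
        Integrable (fun w => Set.indicator (dyCell m k)
          (fun _ => 2 * (1 - gbar k k)) w) Qρ :=
      fun k => (integrable_const _).indicator (measurableSet_dyCell m k)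
    have hgint : Integrable (fun w =>
        D * ((∑ k, |γ k w - Set.indicator (dyCell m k) (fun _ => (1:ℝ)) w|)
          + ∑ k, Set.indicator (dyCell m k) (fun _ => 2 * (1 - gbar k k)) w)) Qρ := by
      exact (((integrable_finset_sum _ fun k _ => hint1 k).add
        (integrable_finset_sum _ fun k _ => hint3 k)).const_mul D)
    refine le_trans (integral_mono_of_nonneg
      (Filter.Eventually.of_forall fun w => W1_nonneg _ _) hgint hgle) ?_
    rw [MeasureTheory.integral_const_mul,
      integral_add (integrable_finset_sum _ fun k _ => hint1 k)
        (integrable_finset_sum _ fun k _ => hint3 k),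
      integral_finset_sum _ fun k _ => hint1 k,
      integral_finset_sum _ fun k _ => hint3 k]
    have hsecond : (∑ k, ∫ w, Set.indicator (dyCell m k)
          (fun _ => 2 * (1 - gbar k k)) w ∂Qρ)
        = ∫ w, ∑ k, |γ k w - Set.indicator (dyCell m k) (fun _ => (1:ℝ)) w| ∂Qρ := by
      rw [hη]
      refine Finset.sum_congr rfl fun k _ => ?_
      rw [integral_indicator_const _ (measurableSet_dyCell m k), smul_eq_mul]
      have hr : (Qρ (dyCell m k)).toReal * (2 * (1 - gbar k k))
          = 2 * ((Qρ (dyCell m k)).toReal - (Qρ (dyCell m k)).toReal * gbar k k) := by ring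
      rw [measureReal_def, hr, hqgbar k, hIint k k]
    rw [← integral_finset_sum _ fun k _ => hint1 k, hsecond]
    exact le_of_eq (by ring)
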